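/- arXiv:2111.06328 — 2 statements merged into one kernel-verified Lean document; each statement's English description precedes it below -/
import Mathlib

section
/- Let f : ℝ^d → ℝ be differentiable, L-smooth and σ-strongly convex, with minimizer x*. Suppose Y is an ℝ^d-valued random vector with E‖Y‖² < ∞ satisfying the distributional fixed-point equation Y =_d Y − √α ∇f(√α Y + x*) + √α w, where w is independent of Y with mean 0 and covariance Σ. If 0 < α ≤ σ/L², then E‖Y‖² ≤ Trace(Σ)/(2σ − L²α) ≤ Trace(Σ)/σ. -/
open MeasureTheory ProbabilityTheory RealInnerProductSpace Matrix

set_option maxHeartbeats 1000000 in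
theorem stmt9 {d : ℕ} (f : EuclideanSpace ℝ (Fin d) → ℝ) (L σ : ℝ)
    (hL : 0 < L) (hσ : 0 < σ)
    (hdiff : Differentiable ℝ f)
    (hsmooth : ∀ x y, ‖gradient f x - gradient f y‖ ≤ L * ‖x - y‖)
    (hsc : ∀ x y, f y ≥ f x + ⟪gradient f x, y - x⟫ + σ / 2 * ‖x - y‖ ^ 2)
    (xstar : EuclideanSpace ℝ (Fin d)) (hmin : gradient f xstar = 0)
    {Ω : Type*} [MeasurableSpace Ω] (P : Measure Ω) [IsProbabilityMeasure P]
    (Y w : Ω → EuclideanSpace ℝ (Fin d)) (hYm : Measurable Y) (hwm : Measurable w)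
    (hindep : IndepFun Y w P)
    (hYint : Integrable (fun ω => ‖Y ω‖ ^ 2) P)
    (hwint : Integrable (fun ω => ‖w ω‖ ^ 2) P)
    (hmean : ∫ ω, w ω ∂P = 0)
    (S : Matrix (Fin d) (Fin d) ℝ)
    (hcov : ∀ i j, ∫ ω, w ω i * w ω j ∂P = S i j)
    (α : ℝ) (hα : 0 < α) (hα' : α ≤ σ / L ^ 2)
    (hfix : P.map Y = P.map (fun ω =>
      Y ω - Real.sqrt α • gradient f (Real.sqrt α • Y ω + xstar) + Real.sqrt α • w ω)) :
    (∫ ω, ‖Y ω‖ ^ 2 ∂P) ≤ S.trace / (2 * σ - L ^ 2 * α) ∧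
      S.trace / (2 * σ - L ^ 2 * α) ≤ S.trace / σ := by
  classical
  set s := Real.sqrt α with hs_def
  have hs0 : 0 < s := Real.sqrt_pos.mpr hα
  have hs2 : s ^ 2 = α := Real.sq_sqrt hα.le
  set g : EuclideanSpace ℝ (Fin d) → EuclideanSpace ℝ (Fin d) :=
    fun y => gradient f (s • y + xstar) with hg_def
  -- continuity of the gradient
  have hgradLip : LipschitzWith L.toNNReal (gradient f) := by
    apply LipschitzWith.of_dist_le_mul
    intro x y
    rw [dist_eq_norm, dist_eq_norm, Real.coe_toNNReal _ hL.le]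
    exact hsmooth x y
  have hgcont : Continuous g := by
    apply hgradLip.continuous.comp
    exact (continuous_const_smul s).add continuous_const
  have hGm : Measurable (fun ω => g (Y ω)) := hgcont.measurable.comp hYm
  -- pointwise bound on g
  have hgb : ∀ y : EuclideanSpace ℝ (Fin d), ‖g y‖ ≤ L * (s * ‖y‖) := by
    intro y
    have h := hsmooth (s • y + xstar) xstar
    rw [hmin, sub_zero, add_sub_cancel_right, norm_smul, Real.norm_eq_abs,
      abs_of_nonneg hs0.le] at h
    exact h
  -- strong monotonicity of the gradient
  have hmono : ∀ y : EuclideanSpace ℝ (Fin d), σ * ‖s • y‖ ^ 2 ≤ ⟪g y, s • y⟫ := by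
    intro y
    have h1 := hsc (s • y + xstar) xstar
    have h2 := hsc xstar (s • y + xstar)
    rw [hmin] at h2
    have e1 : xstar - (s • y + xstar) = -(s • y) := by abel
    have e2 : (s • y + xstar) - xstar = s • y := by abel
    rw [e1] at h1
    rw [e2] at h2
    rw [inner_neg_right] at h1
    rw [inner_zero_left] at h2
    have e3 : ‖s • y + xstar - xstar‖ = ‖s • y‖ := by rw [e2]
    have e4 : ‖xstar - (s • y + xstar)‖ = ‖s • y‖ := by rw [e1, norm_neg]
    rw [e3] at h1
    rw [e4] at h2
    have hg' : g y = gradient f (s • y + xstar) := rfl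
    rw [← hg'] at h1
    linarith
  -- auxiliary function a
  set a : Ω → EuclideanSpace ℝ (Fin d) := fun ω => Y ω - s • g (Y ω) with ha_def
  have ham : Measurable a := hYm.sub (hGm.const_smul s)
  have hproj : ∀ i : Fin d, Measurable (fun x : EuclideanSpace ℝ (Fin d) => x i) :=
    fun i => (EuclideanSpace.proj (𝕜 := ℝ) i).continuous.measurable
  have habd : ∀ ω, ‖a ω‖ ≤ (1 + L * α) * ‖Y ω‖ := by
    intro ω
    have h2 : ‖s • g (Y ω)‖ = s * ‖g (Y ω)‖ := by
      rw [norm_smul, Real.norm_eq_abs, abs_of_nonneg hs0.le]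
    have h3 := hgb (Y ω)
    calc ‖a ω‖ ≤ ‖Y ω‖ + ‖s • g (Y ω)‖ := norm_sub_le _ _
      _ = ‖Y ω‖ + s * ‖g (Y ω)‖ := by rw [h2]
      _ ≤ ‖Y ω‖ + s * (L * (s * ‖Y ω‖)) := by
          nlinarith [mul_le_mul_of_nonneg_left h3 hs0.le]
      _ = (1 + L * α) * ‖Y ω‖ := by rw [← hs2]; ring
  -- integrability facts
  have haInt : Integrable (fun ω => ‖a ω‖ ^ 2) P := by
    apply Integrable.mono' (hYint.const_mul ((1 + L * α) ^ 2))
    · exact (ham.norm.pow_const 2).aestronglyMeasurable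
    · filter_upwards with ω
      rw [Real.norm_eq_abs, abs_of_nonneg (by positivity)]
      nlinarith [habd ω, norm_nonneg (a ω), norm_nonneg (Y ω)]
  have hinnInt : Integrable (fun ω => ⟪a ω, w ω⟫) P := by
    apply Integrable.mono' ((haInt.add hwint).div_const 2)
    · exact (ham.inner hwm).aestronglyMeasurable
    · filter_upwards with ω
      simp only [Pi.add_apply, Real.norm_eq_abs]
      have h1 := abs_real_inner_le_norm (a ω) (w ω)
      nlinarith [norm_nonneg (a ω), norm_nonneg (w ω), sq_nonneg (‖a ω‖ - ‖w ω‖)]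
  have hwInt : Integrable w P := by
    apply Integrable.mono' ((hwint.add (integrable_const 1)).div_const 2)
    · exact hwm.aestronglyMeasurable
    · filter_upwards with ω
      simp only [Pi.add_apply]
      nlinarith [norm_nonneg (w ω), sq_nonneg (‖w ω‖ - 1)]
  have hwi0 : ∀ i, ∫ ω, w ω i ∂P = 0 := by
    intro i
    have h := (EuclideanSpace.proj (𝕜 := ℝ) i).integral_comp_comm hwInt
    simpa [hmean] using h
  have hcompbd : ∀ (x : EuclideanSpace ℝ (Fin d)) i, |x i| ≤ ‖x‖ := by
    intro x i
    have h := abs_real_inner_le_norm (EuclideanSpace.single i (1 : ℝ)) x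
    rw [EuclideanSpace.norm_single] at h
    simpa [EuclideanSpace.inner_single_left] using h
  have habInt : ∀ i, Integrable (fun ω => a ω i * w ω i) P := by
    intro i
    apply Integrable.mono' ((haInt.add hwint).div_const 2)
    · exact (((hproj i).comp ham).mul ((hproj i).comp hwm)).aestronglyMeasurable
    · filter_upwards with ω
      simp only [Pi.add_apply]
      rw [Real.norm_eq_abs, abs_mul]
      have h1 := hcompbd (a ω) i
      have h2 := hcompbd (w ω) i
      nlinarith [abs_nonneg (a ω i), abs_nonneg (w ω i), norm_nonneg (a ω), norm_nonneg (w ω), sq_nonneg (‖a ω‖ - ‖w ω‖), mul_le_mul h1 h2 (abs_nonneg _) (norm_nonneg _)]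
  -- cross term vanishes
  have hcross : ∫ ω, ⟪a ω, w ω⟫ ∂P = 0 := by
    have hrw : ∀ ω, ⟪a ω, w ω⟫ = ∑ i, a ω i * w ω i := by
      intro ω
      simp [PiLp.inner_apply, RCLike.inner_apply, conj_trivial]
      exact Finset.sum_congr rfl (fun i _ => mul_comm _ _)
    calc ∫ ω, ⟪a ω, w ω⟫ ∂P = ∫ ω, ∑ i, a ω i * w ω i ∂P := by
          exact integral_congr_ae (Filter.Eventually.of_forall hrw)
      _ = ∑ i, ∫ ω, a ω i * w ω i ∂P := integral_finset_sum _ (fun i _ => habInt i)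
      _ = 0 := by
        apply Finset.sum_eq_zero
        intro i _
        have hφ : Measurable (fun y : EuclideanSpace ℝ (Fin d) => (y - s • g y) i) :=
          (hproj i).comp ((measurable_id.sub (hgcont.measurable.const_smul s)))
        have hψ : Measurable (fun x : EuclideanSpace ℝ (Fin d) => x i) := hproj i
        have hind : IndepFun (fun ω => a ω i) (fun ω => w ω i) P :=
          hindep.comp hφ hψ
        have := hind.integral_mul_eq_mul_integral
          (((hproj i).comp ham).aestronglyMeasurable)
          (((hproj i).comp hwm).aestronglyMeasurable)
        have hmul : (fun ω => a ω i * w ω i)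
            = (fun ω => a ω i) * (fun ω => w ω i) := rfl
        rw [hmul, this, hwi0 i, mul_zero]
  -- trace identity
  have hwiInt : ∀ i, Integrable (fun ω => w ω i * w ω i) P := by
    intro i
    apply Integrable.mono' hwint
    · exact (((hproj i).comp hwm).mul ((hproj i).comp hwm)).aestronglyMeasurable
    · filter_upwards with ω
      rw [Real.norm_eq_abs, abs_mul]
      have h := hcompbd (w ω) i
      nlinarith [abs_nonneg (w ω i), norm_nonneg (w ω)]
  have htr : S.trace = ∫ ω, ‖w ω‖ ^ 2 ∂P := by
    have hrw : ∀ ω, ‖w ω‖ ^ 2 = ∑ i, w ω i * w ω i := by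
      intro ω
      rw [EuclideanSpace.real_norm_sq_eq]
      simp only [sq]
    calc S.trace = ∑ i, S i i := rfl
      _ = ∑ i, ∫ ω, w ω i * w ω i ∂P := by
          exact Finset.sum_congr rfl (fun i _ => (hcov i i).symm)
      _ = ∫ ω, ∑ i, w ω i * w ω i ∂P := (integral_finset_sum _ (fun i _ => hwiInt i)).symm
      _ = ∫ ω, ‖w ω‖ ^ 2 ∂P := integral_congr_ae (Filter.Eventually.of_forall
          (fun ω => (hrw ω).symm))
  -- fixed point identity
  have hnormsq_cont : Continuous (fun x : EuclideanSpace ℝ (Fin d) => ‖x‖ ^ 2) := by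
    continuity
  have hRm : Measurable (fun ω => Y ω - s • g (Y ω) + s • w ω) :=
    (hYm.sub (hGm.const_smul s)).add (hwm.const_smul s)
  have hmap : ∫ ω, ‖Y ω‖ ^ 2 ∂P = ∫ ω, ‖a ω + s • w ω‖ ^ 2 ∂P := by
    have h1 : ∫ ω, ‖Y ω‖ ^ 2 ∂P
        = ∫ x, ‖x‖ ^ 2 ∂(P.map Y) :=
      (integral_map hYm.aemeasurable hnormsq_cont.aestronglyMeasurable).symm
    have h2 : ∫ x, ‖x‖ ^ 2 ∂(P.map (fun ω => Y ω - s • g (Y ω) + s • w ω))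
        = ∫ ω, ‖Y ω - s • g (Y ω) + s • w ω‖ ^ 2 ∂P :=
      integral_map hRm.aemeasurable hnormsq_cont.aestronglyMeasurable
    rw [h1, hfix]
    exact h2
  have hexpand : ∀ ω, ‖a ω + s • w ω‖ ^ 2
      = ‖a ω‖ ^ 2 + (2 * s * ⟪a ω, w ω⟫ + α * ‖w ω‖ ^ 2) := by
    intro ω
    rw [norm_add_sq_real, real_inner_smul_right, norm_smul, Real.norm_eq_abs,
      abs_of_nonneg hs0.le, mul_pow, hs2]
    ring
  have hiden : ∫ ω, ‖Y ω‖ ^ 2 ∂P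
      = ∫ ω, ‖a ω‖ ^ 2 ∂P + α * S.trace := by
    rw [hmap]
    rw [integral_congr_ae (Filter.Eventually.of_forall hexpand)]
    have hInt2 : Integrable (fun ω => 2 * s * ⟪a ω, w ω⟫ + α * ‖w ω‖ ^ 2) P :=
      (hinnInt.const_mul (2 * s)).add (hwint.const_mul α)
    rw [integral_add haInt hInt2]
    rw [integral_add (hinnInt.const_mul (2 * s)) (hwint.const_mul α),
      integral_const_mul, integral_const_mul, hcross, mul_zero, zero_add, htr]
  -- pointwise bound
  have hptwise : ∀ ω, ‖a ω‖ ^ 2 ≤ ‖Y ω‖ ^ 2 + α * (L ^ 2 * α - 2 * σ) * ‖Y ω‖ ^ 2 := by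
    intro ω
    have he : ‖a ω‖ ^ 2 = ‖Y ω‖ ^ 2 - 2 * ⟪Y ω, s • g (Y ω)⟫ + ‖s • g (Y ω)‖ ^ 2 :=
      norm_sub_sq_real _ _
    have h1 : ⟪Y ω, s • g (Y ω)⟫ = ⟪g (Y ω), s • Y ω⟫ := by
      rw [real_inner_smul_right, real_inner_smul_right, real_inner_comm]
    have h2 := hmono (Y ω)
    have h3 : ‖s • Y ω‖ ^ 2 = α * ‖Y ω‖ ^ 2 := by
      rw [norm_smul, Real.norm_eq_abs, abs_of_nonneg hs0.le, mul_pow, hs2]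
    have h4 : ‖s • g (Y ω)‖ ^ 2 = α * ‖g (Y ω)‖ ^ 2 := by
      rw [norm_smul, Real.norm_eq_abs, abs_of_nonneg hs0.le, mul_pow, hs2]
    have h5 := hgb (Y ω)
    have h6 : ‖g (Y ω)‖ ^ 2 ≤ L ^ 2 * α * ‖Y ω‖ ^ 2 := by
      nlinarith [mul_le_mul h5 h5 (norm_nonneg (g (Y ω)))
        (by positivity : (0:ℝ) ≤ L * (s * ‖Y ω‖)), hs2, norm_nonneg (g (Y ω))]
    rw [he, h1, h4]
    rw [h3] at h2
    have h7 : α * ‖g (Y ω)‖ ^ 2 ≤ α * (L ^ 2 * α * ‖Y ω‖ ^ 2) :=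
      mul_le_mul_of_nonneg_left h6 hα.le
    nlinarith [h2, h7]
  have hImono : ∫ ω, ‖a ω‖ ^ 2 ∂P
      ≤ ∫ ω, ‖Y ω‖ ^ 2 ∂P + α * (L ^ 2 * α - 2 * σ) * ∫ ω, ‖Y ω‖ ^ 2 ∂P := by
    calc ∫ ω, ‖a ω‖ ^ 2 ∂P
        ≤ ∫ ω, (‖Y ω‖ ^ 2 + α * (L ^ 2 * α - 2 * σ) * ‖Y ω‖ ^ 2) ∂P :=
          integral_mono haInt (hYint.add (hYint.const_mul _)) hptwise
      _ = ∫ ω, ‖Y ω‖ ^ 2 ∂P + α * (L ^ 2 * α - 2 * σ) * ∫ ω, ‖Y ω‖ ^ 2 ∂P := by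
          rw [integral_add hYint (hYint.const_mul _), integral_const_mul]
  set I := ∫ ω, ‖Y ω‖ ^ 2 ∂P with hI_def
  have hI0 : 0 ≤ I := integral_nonneg (fun ω => by positivity)
  have hT0 : 0 ≤ S.trace := by
    rw [htr]; exact integral_nonneg (fun ω => by positivity)
  have hLα : L ^ 2 * α ≤ σ := by
    rw [le_div_iff₀ (by positivity)] at hα'
    linarith
  have hden : σ ≤ 2 * σ - L ^ 2 * α := by linarith
  have hdenpos : 0 < 2 * σ - L ^ 2 * α := by linarith
  have hkey : (2 * σ - L ^ 2 * α) * I ≤ S.trace := by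
    have := hiden
    nlinarith [hImono]
  constructor
  · rw [le_div_iff₀ hdenpos]
    linarith [hkey]
  · exact div_le_div_of_nonneg_left hT0 hσ hden
end

section
/- Let A ∈ ℝ^{d×d} be Hurwitz, Σ symmetric positive definite, and Σ_Y the unique solution of A Σ_Y + Σ_Y Aᵀ + Σ = 0. If Y ~ N(0, Σ_Y), then E[(tᵀ Σ t − 2i tᵀ A Y) e^{itᵀY}] = 0 for every t ∈ ℝ^d. -/
open MeasureTheory Matrix Filter Topology

lemma aux_sin_sq_tendsto (x : ℝ) :
    Tendsto (fun n : ℕ => (n : ℝ) ^ 2 * Real.sin ((n : ℝ)⁻¹ * x) ^ 2) atTop (𝓝 (x ^ 2)) := by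
  have key : Tendsto (fun n : ℕ => (n : ℝ) * Real.sin ((n : ℝ)⁻¹ * x)) atTop (𝓝 x) := by
    rcases eq_or_ne x 0 with rfl | hx
    · have h0 : (fun n : ℕ => (n : ℝ) * Real.sin ((n : ℝ)⁻¹ * 0)) = fun _ => (0 : ℝ) := by
        funext n; simp
      rw [h0]; exact tendsto_const_nhds
    · have hslope : Tendsto (fun y : ℝ => Real.sin y / y) (𝓝[≠] 0) (𝓝 1) := by
        have h := Real.hasDerivAt_sin 0
        rw [hasDerivAt_iff_tendsto_slope] at h
        have h2 : Tendsto (fun y : ℝ => Real.sin y / y) (𝓝[≠] 0) (𝓝 (Real.cos 0)) :=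
          h.congr fun y => by simp [slope_def_field]
        simpa using h2
      have harg : Tendsto (fun n : ℕ => (n : ℝ)⁻¹ * x) atTop (𝓝[≠] 0) := by
        rw [tendsto_nhdsWithin_iff]
        constructor
        · simpa using (tendsto_inv_atTop_nhds_zero_nat).mul_const x
        · filter_upwards [eventually_ge_atTop 1] with n hn
          have hn0 : (n : ℝ) ≠ 0 := by positivity
          simp [Set.mem_compl_iff, hx, hn0]
      have hmul := (hslope.comp harg).mul_const x
      rw [one_mul] at hmul
      refine hmul.congr' ?_
      filter_upwards [eventually_ge_atTop 1] with n hn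
      have hn0 : (n : ℝ) ≠ 0 := by positivity
      show Real.sin ((n : ℝ)⁻¹ * x) / ((n : ℝ)⁻¹ * x) * x = (n : ℝ) * Real.sin ((n : ℝ)⁻¹ * x)
      field_simp
  have hsq := key.mul key
  have hx2 : x * x = x ^ 2 := by ring
  rw [hx2] at hsq
  exact hsq.congr fun n => by ring


theorem stmt12 {d : ℕ} {Ω : Type*} [MeasurableSpace Ω] (P : Measure Ω)
    [IsProbabilityMeasure P]
    (A S SY : Matrix (Fin d) (Fin d) ℝ)
    (hA : ∀ μ ∈ spectrum ℂ (A.map Complex.ofReal), μ.re < 0)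
    (hS : S.PosDef)
    (hLyap : A * SY + SY * Aᵀ + S = 0)
    (Y : Ω → Fin d → ℝ) (hY : Measurable Y)
    (hchar : ∀ t : Fin d → ℝ,
      ∫ ω, Complex.exp (Complex.I * ((t ⬝ᵥ Y ω : ℝ) : ℂ)) ∂P =
        Complex.exp (-(1 / 2 : ℂ) * ((t ⬝ᵥ SY.mulVec t : ℝ) : ℂ))) :
    ∀ t : Fin d → ℝ,
      ∫ ω, (((t ⬝ᵥ S.mulVec t : ℝ) : ℂ) -
          2 * Complex.I * ((t ⬝ᵥ A.mulVec (Y ω) : ℝ) : ℂ)) *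
          Complex.exp (Complex.I * ((t ⬝ᵥ Y ω : ℝ) : ℂ)) ∂P = 0 := by
  intro t
  -- direction vector
  set v : Fin d → ℝ := Aᵀ.mulVec t with hv
  set W : Ω → ℝ := fun ω => v ⬝ᵥ Y ω with hW
  set c : ℝ := v ⬝ᵥ SY.mulVec v with hc
  have hvy : ∀ y : Fin d → ℝ, t ⬝ᵥ A.mulVec y = v ⬝ᵥ y := by
    intro y
    rw [Matrix.dotProduct_mulVec, hv, Matrix.mulVec_transpose]
  -- measurability of linear functionals
  have hdotmeas : ∀ u : Fin d → ℝ, Measurable (fun ω => u ⬝ᵥ Y ω) := by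
    intro u
    have h0 : (fun ω => u ⬝ᵥ Y ω) = fun ω => ∑ i, u i * Y ω i := rfl
    rw [h0]
    exact Finset.univ.measurable_sum fun i _ => ((measurable_pi_apply i).comp hY).const_mul _
  have hWmeas : Measurable W := hdotmeas v
  -- integrability of bounded measurable functions
  have hbddint : ∀ (f : Ω → ℝ) (C : ℝ), Measurable f → (∀ ω, |f ω| ≤ C) → Integrable f P := by
    intro f C hf hC
    exact (integrable_const C).mono' hf.aestronglyMeasurable
      (Eventually.of_forall fun ω => by rw [Real.norm_eq_abs]; exact hC ω)
  have hexpint : ∀ f : Ω → ℝ, Measurable f →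
      Integrable (fun ω => Complex.exp (Complex.I * (f ω : ℂ))) P := by
    intro f hf
    refine (integrable_const (1 : ℝ)).mono' ?_ (Eventually.of_forall fun ω => ?_)
    · exact (Complex.measurable_exp.comp
        (measurable_const.mul (Complex.measurable_ofReal.comp hf))).aestronglyMeasurable
    · rw [Complex.norm_exp]
      simp
  -- 1D characteristic function of W
  have hchar1 : ∀ s : ℝ, ∫ ω, Complex.exp (Complex.I * ((s * W ω : ℝ) : ℂ)) ∂P =
      Complex.exp (-(1 / 2 : ℂ) * ((s ^ 2 * c : ℝ) : ℂ)) := by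
    intro s
    have h := hchar (s • v)
    have h1 : ∀ ω, (s • v) ⬝ᵥ Y ω = s * W ω := by
      intro ω; rw [smul_dotProduct]; rfl
    have h2 : (s • v) ⬝ᵥ SY.mulVec (s • v) = s ^ 2 * c := by
      rw [smul_dotProduct, Matrix.mulVec_smul, dotProduct_smul, hc]
      simp [smul_eq_mul]; ring
    simp_rw [h1, h2] at h
    exact h
  -- cosine integrals
  have hcos : ∀ s : ℝ, ∫ ω, Real.cos (s * W ω) ∂P = Real.exp (-(1 / 2) * (s ^ 2 * c)) := by
    intro s
    have hint := hexpint (fun ω => s * W ω) (hWmeas.const_mul s)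
    have h := congrArg Complex.re (hchar1 s)
    have h2 := Complex.reCLM.integral_comp_comm hint
    simp only [Complex.reCLM_apply] at h2
    rw [← h2] at h
    have hre : ∀ ω, (Complex.exp (Complex.I * ((s * W ω : ℝ) : ℂ))).re = Real.cos (s * W ω) := by
      intro ω
      rw [mul_comm, Complex.exp_ofReal_mul_I_re]
    simp_rw [hre] at h
    rw [h]
    have h3 : (-(1 / 2 : ℂ) * ((s ^ 2 * c : ℝ) : ℂ)) = ((-(1 / 2) * (s ^ 2 * c) : ℝ) : ℂ) := by
      push_cast; ring
    rw [h3, ← Complex.ofReal_exp, Complex.ofReal_re]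
  -- second moment bound via Fatou
  have hsin2 : ∀ u : ℝ, ∫ ω, Real.sin (u * W ω) ^ 2 ∂P ≤ u ^ 2 * c := by
    intro u
    have hcosint : Integrable (fun ω => Real.cos (2 * u * W ω)) P :=
      hbddint _ 1 (Real.measurable_cos.comp (hWmeas.const_mul (2 * u)))
        (fun ω => Real.abs_cos_le_one _)
    have hid : ∀ ω, Real.sin (u * W ω) ^ 2 = 1 / 2 - Real.cos (2 * u * W ω) / 2 := by
      intro ω
      have h1 : 2 * u * W ω = 2 * (u * W ω) := by ring
      rw [h1, Real.cos_two_mul]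
      have h2 := Real.sin_sq_add_cos_sq (u * W ω)
      linarith
    have hstep : ∫ ω, Real.sin (u * W ω) ^ 2 ∂P
        = 1 / 2 - (∫ ω, Real.cos (2 * u * W ω) ∂P) / 2 := by
      rw [show (fun ω => Real.sin (u * W ω) ^ 2)
          = fun ω => 1 / 2 - Real.cos (2 * u * W ω) / 2 from funext hid]
      rw [integral_sub (integrable_const _) (hcosint.div_const 2), integral_const,
        integral_div]
      simp
    rw [hstep, hcos (2 * u)]
    have hexp := Real.add_one_le_exp (-(1 / 2) * ((2 * u) ^ 2 * c))
    nlinarith [hexp]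
  have hW2 : ∫⁻ ω, ENNReal.ofReal (W ω ^ 2) ∂P ≤ ENNReal.ofReal c := by
    have hmeasn : ∀ n : ℕ,
        Measurable fun ω => ENNReal.ofReal ((n : ℝ) ^ 2 * Real.sin ((n : ℝ)⁻¹ * W ω) ^ 2) :=
      fun n => ENNReal.measurable_ofReal.comp
        (((Real.measurable_sin.comp (hWmeas.const_mul _)).pow_const 2).const_mul _)
    have hpt : ∀ ω, ENNReal.ofReal (W ω ^ 2)
        = liminf (fun n : ℕ =>
            ENNReal.ofReal ((n : ℝ) ^ 2 * Real.sin ((n : ℝ)⁻¹ * W ω) ^ 2)) atTop := by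
      intro ω
      have htd := (ENNReal.continuous_ofReal.tendsto _).comp (aux_sin_sq_tendsto (W ω))
      exact htd.liminf_eq.symm
    calc ∫⁻ ω, ENNReal.ofReal (W ω ^ 2) ∂P
        = ∫⁻ ω, liminf (fun n : ℕ =>
            ENNReal.ofReal ((n : ℝ) ^ 2 * Real.sin ((n : ℝ)⁻¹ * W ω) ^ 2)) atTop ∂P :=
          lintegral_congr fun ω => hpt ω
      _ ≤ liminf (fun n : ℕ => ∫⁻ ω,
            ENNReal.ofReal ((n : ℝ) ^ 2 * Real.sin ((n : ℝ)⁻¹ * W ω) ^ 2) ∂P) atTop :=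
          lintegral_liminf_le hmeasn
      _ ≤ ENNReal.ofReal c := by
          refine liminf_le_of_frequently_le (Eventually.frequently ?_) (by isBoundedDefault)
          filter_upwards [eventually_ge_atTop 1] with n hn
          have hn0 : (n : ℝ) ≠ 0 := by positivity
          have hintn : Integrable (fun ω => (n : ℝ) ^ 2 * Real.sin ((n : ℝ)⁻¹ * W ω) ^ 2) P := by
            refine hbddint _ ((n : ℝ) ^ 2)
              (((Real.measurable_sin.comp (hWmeas.const_mul _)).pow_const 2).const_mul _)
              fun ω => ?_
            rw [abs_mul, abs_of_nonneg (by positivity : (0:ℝ) ≤ (n:ℝ) ^ 2),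
              abs_of_nonneg (sq_nonneg _)]
            have hs := Real.neg_one_le_sin ((n : ℝ)⁻¹ * W ω)
            have hs2 := Real.sin_le_one ((n : ℝ)⁻¹ * W ω)
            have hs3 : Real.sin ((n : ℝ)⁻¹ * W ω) ^ 2 ≤ 1 := by nlinarith
            calc (n : ℝ) ^ 2 * Real.sin ((n : ℝ)⁻¹ * W ω) ^ 2 ≤ (n : ℝ) ^ 2 * 1 :=
                mul_le_mul_of_nonneg_left hs3 (by positivity)
              _ = (n : ℝ) ^ 2 := mul_one _
          rw [← ofReal_integral_eq_lintegral_ofReal hintn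
            (Eventually.of_forall fun ω => by positivity)]
          apply ENNReal.ofReal_le_ofReal
          have hb := hsin2 ((n : ℝ)⁻¹)
          have : ∫ ω, (n : ℝ) ^ 2 * Real.sin ((n : ℝ)⁻¹ * W ω) ^ 2 ∂P
              = (n : ℝ) ^ 2 * ∫ ω, Real.sin ((n : ℝ)⁻¹ * W ω) ^ 2 ∂P := integral_const_mul _ _
          rw [this]
          have hfin : (n : ℝ) ^ 2 * (((n : ℝ)⁻¹) ^ 2 * c) = c := by field_simp
          nlinarith [sq_nonneg (n : ℝ), mul_le_mul_of_nonneg_left hb (by positivity : (0:ℝ) ≤ (n:ℝ)^2)]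
  have hWint : Integrable W P := by
    refine ⟨hWmeas.aestronglyMeasurable, ?_⟩
    rw [hasFiniteIntegral_iff_norm]
    calc ∫⁻ ω, ENNReal.ofReal ‖W ω‖ ∂P
        ≤ ∫⁻ ω, (ENNReal.ofReal (W ω ^ 2) + 1) ∂P := by
          apply lintegral_mono fun ω => ?_
          rw [Real.norm_eq_abs]
          have h1 : |W ω| ≤ W ω ^ 2 + 1 := by
            nlinarith [sq_abs (W ω), sq_nonneg (|W ω| - 1), abs_nonneg (W ω)]
          calc ENNReal.ofReal |W ω| ≤ ENNReal.ofReal (W ω ^ 2 + 1) :=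
                ENNReal.ofReal_le_ofReal h1
            _ = ENNReal.ofReal (W ω ^ 2) + ENNReal.ofReal 1 :=
                ENNReal.ofReal_add (sq_nonneg _) zero_le_one
            _ = ENNReal.ofReal (W ω ^ 2) + 1 := by rw [ENNReal.ofReal_one]
      _ = (∫⁻ ω, ENNReal.ofReal (W ω ^ 2) ∂P) + 1 := by
          rw [lintegral_add_right _ measurable_const, lintegral_const]
          simp
      _ ≤ ENNReal.ofReal c + 1 := add_le_add hW2 le_rfl
      _ < ⊤ := by simp [ENNReal.ofReal_lt_top, ENNReal.add_lt_top]
  -- setup for differentiation of the characteristic function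
  set a0 : ℝ := t ⬝ᵥ SY.mulVec t with ha0
  set a1 : ℝ := t ⬝ᵥ SY.mulVec v + v ⬝ᵥ SY.mulVec t with ha1def
  have hFeq : ∀ (u : ℝ) (ω : Ω), (t + u • v) ⬝ᵥ Y ω = t ⬝ᵥ Y ω + u * W ω := by
    intro u ω
    rw [add_dotProduct, smul_dotProduct]
    rfl
  have hqeq : ∀ u : ℝ, (t + u • v) ⬝ᵥ SY.mulVec (t + u • v) = a0 + u * a1 + u ^ 2 * c := by
    intro u
    rw [Matrix.mulVec_add, Matrix.mulVec_smul, add_dotProduct, smul_dotProduct,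
      dotProduct_add, dotProduct_add, dotProduct_smul,
      dotProduct_smul, ha0, ha1def, hc]
    simp only [smul_eq_mul]
    ring
  have hone : HasDerivAt (fun u : ℝ => (u : ℂ)) 1 0 := by
    simpa using (hasDerivAt_id (0 : ℝ)).ofReal_comp
  -- dominated differentiation
  have hder := hasDerivAt_integral_of_dominated_loc_of_deriv_le (μ := P) (x₀ := (0 : ℝ))
    (F := fun u ω => Complex.exp (Complex.I * (((t + u • v) ⬝ᵥ Y ω : ℝ) : ℂ)))
    (F' := fun u ω => Complex.I * ((W ω : ℝ) : ℂ) *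
      Complex.exp (Complex.I * (((t + u • v) ⬝ᵥ Y ω : ℝ) : ℂ)))
    (bound := fun ω => |W ω|) (Metric.ball_mem_nhds (0 : ℝ) one_pos)
    (Eventually.of_forall fun u =>
      (hexpint (fun ω => (t + u • v) ⬝ᵥ Y ω) (hdotmeas _)).aestronglyMeasurable)
    (hexpint (fun ω => (t + (0 : ℝ) • v) ⬝ᵥ Y ω) (hdotmeas _))
    (((measurable_const.mul (Complex.measurable_ofReal.comp hWmeas)).mul
      (Complex.measurable_exp.comp (measurable_const.mul
        (Complex.measurable_ofReal.comp (hdotmeas _))))).aestronglyMeasurable)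
    (Eventually.of_forall fun ω u _ => ?_) hWint.abs
    (Eventually.of_forall fun ω u _ => ?_)
  rotate_left
  · -- norm bound
    rw [norm_mul, norm_mul, Complex.norm_exp]
    simp [Complex.mul_re]
  · -- pointwise derivative
    have hcast : ∀ u' : ℝ, Complex.I * (((t + u' • v) ⬝ᵥ Y ω : ℝ) : ℂ)
        = Complex.I * (((t ⬝ᵥ Y ω : ℝ) : ℂ) + (u' : ℂ) * ((W ω : ℝ) : ℂ)) := by
      intro u'
      rw [hFeq]
      push_cast
      ring
    have h1 : HasDerivAt (fun u' : ℝ => (u' : ℂ)) 1 u := by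
      simpa using (hasDerivAt_id u).ofReal_comp
    have h2 := ((h1.mul_const ((W ω : ℝ) : ℂ)).const_add ((t ⬝ᵥ Y ω : ℝ) : ℂ)).const_mul
      Complex.I
    have h3 := h2.cexp
    have h4 : HasDerivAt (fun u' : ℝ =>
        Complex.exp (Complex.I * (((t ⬝ᵥ Y ω : ℝ) : ℂ) + (u' : ℂ) * ((W ω : ℝ) : ℂ))))
        (Complex.I * ((W ω : ℝ) : ℂ) *
          Complex.exp (Complex.I * (((t + u • v) ⬝ᵥ Y ω : ℝ) : ℂ))) u := by
      rw [hcast u]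
      convert h3 using 1
      ring
    refine h4.congr_of_eventuallyEq (Eventually.of_forall fun u' => ?_)
    show Complex.exp (Complex.I * (((t + u' • v) ⬝ᵥ Y ω : ℝ) : ℂ))
        = Complex.exp (Complex.I * (((t ⬝ᵥ Y ω : ℝ) : ℂ) + (u' : ℂ) * ((W ω : ℝ) : ℂ)))
    rw [hcast u']
  obtain ⟨hF'int, hDF⟩ := hder
  -- identify the integral with the Gaussian expression
  have hFG : (fun u : ℝ => ∫ ω, Complex.exp (Complex.I * (((t + u • v) ⬝ᵥ Y ω : ℝ) : ℂ)) ∂P)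
      = fun u : ℝ => Complex.exp (-(1 / 2 : ℂ) *
          ((a0 : ℂ) + (u : ℂ) * (a1 : ℂ) + (u : ℂ) ^ 2 * (c : ℂ))) := by
    funext u
    rw [hchar (t + u • v), hqeq u]
    push_cast
    ring_nf
  rw [hFG] at hDF
  -- derivative of the Gaussian expression
  have hG : HasDerivAt (fun u : ℝ => Complex.exp (-(1 / 2 : ℂ) *
      ((a0 : ℂ) + (u : ℂ) * (a1 : ℂ) + (u : ℂ) ^ 2 * (c : ℂ))))
      (-(1 / 2 : ℂ) * (a1 : ℂ) * Complex.exp (-(1 / 2 : ℂ) * (a0 : ℂ))) 0 := by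
    have h2 : HasDerivAt (fun u : ℝ => ((a0 : ℂ) + (u : ℂ) * (a1 : ℂ) + (u : ℂ) ^ 2 * (c : ℂ)))
        ((a1 : ℂ)) 0 := by
      have hx := (hone.mul_const ((a1 : ℝ) : ℂ)).const_add ((a0 : ℝ) : ℂ)
      have hy := (hone.mul hone).mul_const ((c : ℝ) : ℂ)
      have hxy := hx.add hy
      have hfn : (fun u : ℝ => ((a0 : ℂ) + (u : ℂ) * (a1 : ℂ) + (u : ℂ) ^ 2 * (c : ℂ)))
          = fun u : ℝ => ((a0 : ℂ) + (u : ℂ) * (a1 : ℂ)) + ((u : ℂ) * (u : ℂ)) * (c : ℂ) := by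
        funext u; ring
      rw [hfn]
      refine hxy.congr_deriv ?_
      push_cast
      ring
    have h3 := (h2.const_mul (-(1 / 2 : ℂ))).cexp
    convert h3 using 1
    norm_num
    ring
  have hkey := hDF.unique hG
  -- Lyapunov identity
  have hlyap' : a1 + t ⬝ᵥ S.mulVec t = 0 := by
    have h0 : t ⬝ᵥ ((A * SY + SY * Aᵀ + S) *ᵥ t) = 0 := by
      rw [hLyap, Matrix.zero_mulVec, dotProduct_zero]
    rw [Matrix.add_mulVec, Matrix.add_mulVec, dotProduct_add, dotProduct_add,
      ← Matrix.mulVec_mulVec, ← Matrix.mulVec_mulVec, hvy (SY.mulVec t)] at h0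
    rw [ha1def, hv]
    linarith [h0]
  -- final computation
  have hEint := hexpint (fun ω => t ⬝ᵥ Y ω) (hdotmeas t)
  simp only [zero_smul, add_zero] at hF'int hkey
  have hsplit : ∀ ω : Ω, (((t ⬝ᵥ S.mulVec t : ℝ) : ℂ) -
      2 * Complex.I * ((t ⬝ᵥ A.mulVec (Y ω) : ℝ) : ℂ)) *
      Complex.exp (Complex.I * ((t ⬝ᵥ Y ω : ℝ) : ℂ))
      = ((t ⬝ᵥ S.mulVec t : ℝ) : ℂ) * Complex.exp (Complex.I * ((t ⬝ᵥ Y ω : ℝ) : ℂ))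
        - 2 * (Complex.I * ((W ω : ℝ) : ℂ) *
          Complex.exp (Complex.I * ((t ⬝ᵥ Y ω : ℝ) : ℂ))) := by
    intro ω
    rw [hvy (Y ω)]
    ring
  rw [show (fun ω => (((t ⬝ᵥ S.mulVec t : ℝ) : ℂ) -
      2 * Complex.I * ((t ⬝ᵥ A.mulVec (Y ω) : ℝ) : ℂ)) *
      Complex.exp (Complex.I * ((t ⬝ᵥ Y ω : ℝ) : ℂ))) = _ from funext hsplit]
  rw [integral_sub (hEint.const_mul _) (hF'int.const_mul 2), integral_const_mul,
    integral_const_mul, hkey, hchar t]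
  have hSt : a1 = -(t ⬝ᵥ S.mulVec t) := by linarith [hlyap']
  rw [hSt]
  push_cast
  ring
end
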